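/- Let x, b ∈ ℝ³ with 0 < |b − x| < 2, set s = |b − x|/2, and let a ∈ ℝ³ satisfy |a − (b + x)/2| = √(1 − s²) and (a − (b + x)/2)·(b − x) = 0. Define the curve γ(t) = (b + x)/2 + cos(t)·(a − (b + x)/2) + sin(t)·((b − x)/|b − x|) × (a − (b + x)/2) for t ∈ ℝ, and define ν(t) = (γ'(t)/|γ'(t)|) × (γ(t) − x). Then for every ψ ≥ 0, ∫₀^ψ ν(t)·|γ'(t)| dt = −s·((b − x)/|b − x|) × (γ(ψ) − a) − ψ·((1 − s²)/s)·(b − x)/2. -/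

import Mathlib

open Real MeasureTheory

/-- The cross product on `EuclideanSpace ℝ (Fin 3)`. -/
noncomputable def cross3 (u v : EuclideanSpace ℝ (Fin 3)) : EuclideanSpace ℝ (Fin 3) :=
  (EuclideanSpace.equiv (Fin 3) ℝ).symm
    (crossProduct (EuclideanSpace.equiv (Fin 3) ℝ u) (EuclideanSpace.equiv (Fin 3) ℝ v))


lemma cross3_apply (u v : EuclideanSpace ℝ (Fin 3)) (i : Fin 3) :
    cross3 u v i = ![u 1 * v 2 - u 2 * v 1, u 2 * v 0 - u 0 * v 2, u 0 * v 1 - u 1 * v 0] i := by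
  simp [cross3, crossProduct, EuclideanSpace.equiv]

lemma e3_sub_apply (y z : EuclideanSpace ℝ (Fin 3)) (j : Fin 3) : (y - z) j = y j - z j := rfl
lemma e3_add_apply (y z : EuclideanSpace ℝ (Fin 3)) (j : Fin 3) : (y + z) j = y j + z j := rfl
lemma e3_neg_apply (y : EuclideanSpace ℝ (Fin 3)) (j : Fin 3) : (-y) j = -(y j) := rfl
lemma e3_smul_apply (c : ℝ) (z : EuclideanSpace ℝ (Fin 3)) (j : Fin 3) : (c • z) j = c * z j := rfl

lemma cross3_cross3 (p q r : EuclideanSpace ℝ (Fin 3)) :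
    cross3 p (cross3 q r) = (inner ℝ p r : ℝ) • q - (inner ℝ p q : ℝ) • r := by
  refine PiLp.ext fun i => ?_
  fin_cases i <;>
    simp [cross3_apply, e3_sub_apply, e3_smul_apply, PiLp.inner_apply, Fin.sum_univ_three] <;> ring

lemma cross3_add_left (p p' q : EuclideanSpace ℝ (Fin 3)) :
    cross3 (p + p') q = cross3 p q + cross3 p' q := by
  refine PiLp.ext fun i => ?_
  fin_cases i <;> simp [cross3_apply, e3_add_apply, e3_smul_apply] <;> ring

lemma cross3_add_right (p q q' : EuclideanSpace ℝ (Fin 3)) :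
    cross3 p (q + q') = cross3 p q + cross3 p q' := by
  refine PiLp.ext fun i => ?_
  fin_cases i <;> simp [cross3_apply, e3_add_apply, e3_smul_apply] <;> ring

lemma cross3_smul_left (c : ℝ) (p q : EuclideanSpace ℝ (Fin 3)) :
    cross3 (c • p) q = c • cross3 p q := by
  refine PiLp.ext fun i => ?_
  fin_cases i <;> simp [cross3_apply, e3_smul_apply] <;> ring

lemma cross3_smul_right (c : ℝ) (p q : EuclideanSpace ℝ (Fin 3)) :
    cross3 p (c • q) = c • cross3 p q := by
  refine PiLp.ext fun i => ?_
  fin_cases i <;> simp [cross3_apply, e3_smul_apply] <;> ring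

lemma cross3_anticomm (p q : EuclideanSpace ℝ (Fin 3)) : cross3 p q = - cross3 q p := by
  refine PiLp.ext fun i => ?_
  fin_cases i <;> simp [cross3_apply, e3_neg_apply] <;> ring

lemma cross3_self (p : EuclideanSpace ℝ (Fin 3)) : cross3 p p = 0 := by
  refine PiLp.ext fun i => ?_
  fin_cases i <;> simp [cross3_apply] <;> ring

lemma inner_cross3_right_self (p q : EuclideanSpace ℝ (Fin 3)) :
    (inner ℝ q (cross3 p q) : ℝ) = 0 := by
  simp [cross3_apply, PiLp.inner_apply, Fin.sum_univ_three]; ring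

lemma inner_cross3_left_self (p q : EuclideanSpace ℝ (Fin 3)) :
    (inner ℝ p (cross3 p q) : ℝ) = 0 := by
  simp [cross3_apply, PiLp.inner_apply, Fin.sum_univ_three]; ring

lemma inner_cross3_cross3 (p q : EuclideanSpace ℝ (Fin 3)) :
    (inner ℝ (cross3 p q) (cross3 p q) : ℝ)
      = (inner ℝ p p : ℝ) * (inner ℝ q q : ℝ) - (inner ℝ p q : ℝ) ^ 2 := by
  simp only [PiLp.inner_apply]
  simp [cross3_apply, PiLp.inner_apply, Fin.sum_univ_three]; ring

/-- The key integral of the outward conormal along an edge of a Reuleaux polyhedron. -/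
theorem stmt_9 (x b : EuclideanSpace ℝ (Fin 3)) (h0 : 0 < ‖b - x‖) (h2 : ‖b - x‖ < 2)
    (s : ℝ) (hs : s = ‖b - x‖ / 2)
    (a : EuclideanSpace ℝ (Fin 3))
    (ha1 : ‖a - ((1 : ℝ) / 2) • (b + x)‖ = Real.sqrt (1 - s ^ 2))
    (ha2 : (inner ℝ (a - ((1 : ℝ) / 2) • (b + x)) (b - x) : ℝ) = 0)
    (γ : ℝ → EuclideanSpace ℝ (Fin 3))
    (hγ : ∀ t : ℝ, γ t = ((1 : ℝ) / 2) • (b + x)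
        + Real.cos t • (a - ((1 : ℝ) / 2) • (b + x))
        + Real.sin t • cross3 (‖b - x‖⁻¹ • (b - x)) (a - ((1 : ℝ) / 2) • (b + x)))
    (ν : ℝ → EuclideanSpace ℝ (Fin 3))
    (hν : ∀ t : ℝ, ν t = cross3 (‖deriv γ t‖⁻¹ • deriv γ t) (γ t - x))
    (ψ : ℝ) (hψ : 0 ≤ ψ) :
    (∫ t in (0:ℝ)..ψ, ‖deriv γ t‖ • ν t) =
      (-s) • cross3 (‖b - x‖⁻¹ • (b - x)) (γ ψ - a)
        - (ψ * ((1 - s ^ 2) / s)) • (((1 : ℝ) / 2) • (b - x)) := by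
  set m : EuclideanSpace ℝ (Fin 3) := ((1 : ℝ) / 2) • (b + x) with hm
  set w : EuclideanSpace ℝ (Fin 3) := a - m with hw
  set u : EuclideanSpace ℝ (Fin 3) := ‖b - x‖⁻¹ • (b - x) with hu
  set v : EuclideanSpace ℝ (Fin 3) := cross3 u w with hv
  have hbx : ‖b - x‖ ≠ 0 := ne_of_gt h0
  have hs0 : 0 < s := by rw [hs]; linarith
  have hs1 : s < 1 := by rw [hs]; linarith
  have h1s : (0:ℝ) < 1 - s ^ 2 := by nlinarith
  -- inner product facts
  have hnu : ‖u‖ = 1 := by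
    rw [hu, norm_smul, norm_inv, norm_norm, inv_mul_cancel₀ hbx]
  have huu : (inner ℝ u u : ℝ) = 1 := by
    rw [real_inner_self_eq_norm_sq, hnu]; norm_num
  have huw : (inner ℝ u w : ℝ) = 0 := by
    rw [hu, real_inner_smul_left, real_inner_comm, ha2, mul_zero]
  have hww : (inner ℝ w w : ℝ) = 1 - s ^ 2 := by
    rw [real_inner_self_eq_norm_sq, hw, hm, ha1, Real.sq_sqrt (le_of_lt h1s)]
  have hwv : (inner ℝ w v : ℝ) = 0 := inner_cross3_right_self u w
  have huv : (inner ℝ u v : ℝ) = 0 := inner_cross3_left_self u w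
  have hvw : (inner ℝ v w : ℝ) = 0 := by rw [real_inner_comm]; exact hwv
  have hvv : (inner ℝ v v : ℝ) = 1 - s ^ 2 := by
    rw [hv, inner_cross3_cross3, huu, huw, hww]; ring
  -- cross product table
  have hcuv : cross3 u v = -w := by
    rw [hv, cross3_cross3, huw, huu]; simp
  have hcwv : cross3 w v = (1 - s ^ 2) • u := by
    rw [hv, cross3_cross3, hww, real_inner_comm, huw]; simp
  have hcwu : cross3 w u = -v := by rw [cross3_anticomm w u, hv]
  have hsu : ((1 : ℝ) / 2) • (b - x) = s • u := by
    rw [hu, smul_smul, hs]; congr 1; field_simp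
  have hmx : m - x = s • u := by
    rw [← hsu, hm]; module
  -- the radius
  set r : ℝ := Real.sqrt (1 - s ^ 2) with hr
  have hr0 : 0 < r := Real.sqrt_pos.2 h1s
  have hr2 : r ^ 2 = 1 - s ^ 2 := Real.sq_sqrt (le_of_lt h1s)
  -- derivative of γ
  have hγf : γ = fun t => m + Real.cos t • w + Real.sin t • v := funext hγ
  have hd : ∀ t : ℝ, HasDerivAt γ ((-Real.sin t) • w + Real.cos t • v) t := by
    intro t
    rw [hγf]
    have h1 : HasDerivAt (fun t : ℝ => Real.cos t • w) ((-Real.sin t) • w) t :=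
      (Real.hasDerivAt_cos t).smul_const w
    have h2 : HasDerivAt (fun t : ℝ => Real.sin t • v) (Real.cos t • v) t :=
      (Real.hasDerivAt_sin t).smul_const v
    have h3 := ((hasDerivAt_const t m).add h1).add h2
    rw [zero_add] at h3
    exact h3
  have hderiv : ∀ t : ℝ, deriv γ t = (-Real.sin t) • w + Real.cos t • v :=
    fun t => (hd t).deriv
  have hnormd : ∀ t : ℝ, ‖deriv γ t‖ = r := by
    intro t
    have h1 : (inner ℝ (deriv γ t) (deriv γ t) : ℝ) = 1 - s ^ 2 := by
      rw [hderiv]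
      simp only [inner_add_add_self, real_inner_smul_left, real_inner_smul_right,
        huu, hww, hvv, hwv, hvw]
      linear_combination (1 - s ^ 2) * Real.sin_sq_add_cos_sq t
    have h2 : ‖deriv γ t‖ ^ 2 = r ^ 2 := by
      rw [← real_inner_self_eq_norm_sq, h1, hr2]
    rw [← Real.sqrt_sq (norm_nonneg _), h2, Real.sqrt_sq hr0.le]
  -- integrand
  have hint : ∀ t : ℝ, ‖deriv γ t‖ • ν t
      = (s * Real.sin t) • v + (s * Real.cos t) • w + (-(1 - s ^ 2)) • u := by
    intro t
    rw [hν t, hnormd t, cross3_smul_left, smul_smul, mul_inv_cancel₀ (ne_of_gt hr0), one_smul]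
    have hγx : γ t - x = s • u + Real.cos t • w + Real.sin t • v := by
      rw [hγ t, ← hmx]; module
    rw [hγx, hderiv t]
    rw [cross3_add_left, cross3_add_right, cross3_add_right, cross3_add_right, cross3_add_right]
    simp only [cross3_smul_left, cross3_smul_right, cross3_self, smul_zero,
      cross3_anticomm v u, cross3_anticomm v w, hcuv, hcwv, hcwu]
    have hpyth : Real.sin t ^ 2 + Real.cos t ^ 2 = 1 := Real.sin_sq_add_cos_sq t
    match_scalars <;>
      first
        | ring1
        | linear_combination ((s ^ 2 - 1) * ‖b - x‖⁻¹) * hpyth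
        | linear_combination ((1 - s ^ 2) * ‖b - x‖⁻¹) * hpyth
        | linear_combination (2 * (s ^ 2 - 1) * ‖b - x‖⁻¹) * hpyth
        | linear_combination (2 * (1 - s ^ 2) * ‖b - x‖⁻¹) * hpyth
  have i1 : (∫ t in (0:ℝ)..ψ, s * Real.sin t) = s * (1 - Real.cos ψ) := by
    rw [intervalIntegral.integral_const_mul, integral_sin]; simp
  have i2 : (∫ t in (0:ℝ)..ψ, s * Real.cos t) = s * Real.sin ψ := by
    rw [intervalIntegral.integral_const_mul, integral_cos]; simp
  have hIcalc : (∫ t in (0:ℝ)..ψ, ‖deriv γ t‖ • ν t)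
      = (s * (1 - Real.cos ψ)) • v + (s * Real.sin ψ) • w + (ψ * (-(1 - s ^ 2))) • u := by
    rw [intervalIntegral.integral_congr (g := fun t =>
      (s * Real.sin t) • v + (s * Real.cos t) • w + (-(1 - s ^ 2)) • u) (fun t _ => hint t)]
    rw [intervalIntegral.integral_add, intervalIntegral.integral_add,
      intervalIntegral.integral_smul_const, intervalIntegral.integral_smul_const,
      intervalIntegral.integral_const, i1, i2, smul_smul]
    · norm_num
    · exact ((continuous_const.mul Real.continuous_sin).smul
        continuous_const).intervalIntegrable 0 ψ
    · exact ((continuous_const.mul Real.continuous_cos).smul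
        continuous_const).intervalIntegrable 0 ψ
    · exact (((continuous_const.mul Real.continuous_sin).smul continuous_const).add
        ((continuous_const.mul Real.continuous_cos).smul
          continuous_const)).intervalIntegrable 0 ψ
    · exact continuous_const.intervalIntegrable 0 ψ
  have hγψa : γ ψ - a = (Real.cos ψ - 1) • w + Real.sin ψ • v := by
    have haw : a = m + w := by rw [hw]; module
    rw [hγ ψ, haw]; module
  have hcoef : (ψ * ((1 - s ^ 2) / s)) • (((1 : ℝ) / 2) • (b - x))
      = (ψ * (1 - s ^ 2)) • u := by
    rw [hsu, smul_smul]; congr 1; field_simp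
  rw [hIcalc, hγψa, hcoef, cross3_add_right, cross3_smul_right, cross3_smul_right, ← hv, hcuv]
  module
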